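/- Let a ∈ ℝ, e := (a, 0, 1) ∈ ℝ³, and let u₀ ∈ ℝ³ be orthogonal to e. Define f(x) := 1 + a·x₁ + x₃ and u(x) := cos(f(x)²/(2|e|))·u₀ + sin(f(x)²/(2|e|))·(u₀ × e)/|e|. Then u satisfies curl u = f·u and div u = 0 on all of ℝ³. -/

import Mathlib

/-- Vectors in ℝ³. -/
abbrev V3 := Fin 3 → ℝ

/-- Partial derivative of a scalar function on ℝ³. -/
noncomputable def pd (f : V3 → ℝ) (i : Fin 3) (x : V3) : ℝ :=
  fderiv ℝ f x (Pi.single i 1)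

/-- Gradient. -/
noncomputable def grad (f : V3 → ℝ) (x : V3) : V3 := fun i => pd f i x

/-- Divergence. -/
noncomputable def div3 (u : V3 → V3) (x : V3) : ℝ :=
  ∑ i, pd (fun y => u y i) i x

/-- Curl. -/
noncomputable def curl3 (u : V3 → V3) (x : V3) : V3 :=
  ![pd (fun y => u y 2) 1 x - pd (fun y => u y 1) 2 x,
    pd (fun y => u y 0) 2 x - pd (fun y => u y 2) 0 x,
    pd (fun y => u y 1) 0 x - pd (fun y => u y 0) 1 x]

/-- Euclidean dot product. -/
def dot3 (a b : V3) : ℝ := ∑ i, a i * b i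

/-- Cross product in ℝ³. -/
def cross (a b : V3) : V3 :=
  ![a 1 * b 2 - a 2 * b 1, a 2 * b 0 - a 0 * b 2, a 0 * b 1 - a 1 * b 0]

/-- The linear functional `y ↦ a * y 0 + y 2`. -/
noncomputable def Lmap (a : ℝ) : V3 →L[ℝ] ℝ :=
  a • ContinuousLinearMap.proj 0 + ContinuousLinearMap.proj 2

lemma hasFDerivAt_comp_aux (a n c₁ c₂ : ℝ) (hn : n ≠ 0) (x : V3) :
    HasFDerivAt (fun y : V3 => Real.cos ((1 + a * y 0 + y 2) ^ 2 / (2 * n)) * c₁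
        + Real.sin ((1 + a * y 0 + y 2) ^ 2 / (2 * n)) * c₂)
      (((-Real.sin ((1 + a * x 0 + x 2) ^ 2 / (2 * n)) * c₁
          + Real.cos ((1 + a * x 0 + x 2) ^ 2 / (2 * n)) * c₂)
        * ((1 + a * x 0 + x 2) / n)) • Lmap a) x := by
  have hf : HasFDerivAt (fun y : V3 => 1 + a * y 0 + y 2) (Lmap a) x := by
    have h2 : (fun y : V3 => 1 + a * y 0 + y 2) = fun y => 1 + Lmap a y := by
      funext y; simp [Lmap, smul_eq_mul]; ring
    rw [h2]; exact ((Lmap a).hasFDerivAt).const_add 1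
  have hg : HasFDerivAt (fun y : V3 => (1 + a * y 0 + y 2) ^ 2 / (2 * n))
      (((1 + a * x 0 + x 2) / n) • Lmap a) x := by
    simp only [pow_two, div_eq_mul_inv]
    refine ((hf.mul hf).mul_const ((2 * n)⁻¹)).congr_fderiv ?_
    ext y
    simp [smul_eq_mul]
    field_simp
    ring
  refine ((hg.cos.mul_const c₁).add (hg.sin.mul_const c₂)).congr_fderiv ?_
  ext y
  simp [smul_eq_mul]
  ring

lemma pd_comp_aux (a n c₁ c₂ : ℝ) (hn : n ≠ 0) (j : Fin 3) (x : V3) :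
    pd (fun y : V3 => Real.cos ((1 + a * y 0 + y 2) ^ 2 / (2 * n)) * c₁
        + Real.sin ((1 + a * y 0 + y 2) ^ 2 / (2 * n)) * c₂) j x
      = (-Real.sin ((1 + a * x 0 + x 2) ^ 2 / (2 * n)) * c₁
          + Real.cos ((1 + a * x 0 + x 2) ^ 2 / (2 * n)) * c₂)
        * ((1 + a * x 0 + x 2) / n) * (![a, 0, 1] j) := by
  rw [pd, (hasFDerivAt_comp_aux a n c₁ c₂ hn x).fderiv]
  fin_cases j <;> simp [Lmap, smul_eq_mul, Pi.single_apply]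

/-- Explicit global Beltrami field with the nonconstant affine factor
`f(x) = 1 + a x₁ + x₃`: with `e = (a,0,1)` and `u₀ ⟂ e`,
`u = cos(f²/(2|e|)) u₀ + sin(f²/(2|e|)) (u₀ × e)/|e|` satisfies
`curl u = f u` and `div u = 0` on all of ℝ³. -/
theorem affine_factor_beltrami (a : ℝ) (u₀ : V3)
    (horth : dot3 u₀ ![a, 0, 1] = 0) :
    let e : V3 := ![a, 0, 1]
    let ne : ℝ := Real.sqrt (a ^ 2 + 1)
    let f : V3 → ℝ := fun x => 1 + a * x 0 + x 2
    let u : V3 → V3 := fun x =>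
      Real.cos ((f x) ^ 2 / (2 * ne)) • u₀
        + Real.sin ((f x) ^ 2 / (2 * ne)) • (ne⁻¹ • cross u₀ e)
    ∀ x, curl3 u x = f x • u x ∧ div3 u x = 0 := by
  intro e ne f u x
  have hnpos : 0 < ne := Real.sqrt_pos.mpr (by positivity)
  have hn : ne ≠ 0 := ne_of_gt hnpos
  have hn2 : ne ^ 2 = a ^ 2 + 1 := Real.sq_sqrt (by positivity)
  have ho : u₀ 0 * a + u₀ 2 = 0 := by
    have h := horth
    simp [dot3, Fin.sum_univ_three] at h
    linarith
  have h2 : u₀ 2 = -(u₀ 0 * a) := by linarith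
  set s := Real.sin ((1 + a * x 0 + x 2) ^ 2 / (2 * ne)) with hs
  set co := Real.cos ((1 + a * x 0 + x 2) ^ 2 / (2 * ne)) with hco
  have hpd : ∀ i j : Fin 3, pd (fun y => u y i) j x
      = (-s * (u₀ i) + co * (ne⁻¹ * cross u₀ e i))
        * ((1 + a * x 0 + x 2) / ne) * (![a, 0, 1] j) := by
    intro i j
    have heq : (fun y => u y i) = fun y : V3 =>
        Real.cos ((1 + a * y 0 + y 2) ^ 2 / (2 * ne)) * (u₀ i)
          + Real.sin ((1 + a * y 0 + y 2) ^ 2 / (2 * ne)) * (ne⁻¹ * cross u₀ e i) := by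
      funext y; rfl
    rw [heq, pd_comp_aux a ne _ _ hn j x]
  have hc0 : cross u₀ e 0 = u₀ 1 := by simp [cross, e]
  have hc1 : cross u₀ e 1 = a * u₀ 2 - u₀ 0 := by simp [cross, e]; ring
  have hc2 : cross u₀ e 2 = -(a * u₀ 1) := by simp [cross, e]; ring
  refine ⟨?_, ?_⟩
  · funext i
    fin_cases i
    · show pd (fun y => u y 2) 1 x - pd (fun y => u y 1) 2 x
        = (1 + a * x 0 + x 2) * (co * u₀ 0 + s * (ne⁻¹ * cross u₀ e 0))
      rw [hpd 2 1, hpd 1 2, hc0, hc1, hc2]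
      simp only [Matrix.cons_val_zero, Matrix.cons_val_one, Matrix.head_cons,
        Matrix.cons_val_two, Matrix.tail_cons]
      rw [h2]
      field_simp
      linear_combination (-(co * u₀ 0 * (1 + a * x 0 + x 2))) * hn2
    · show pd (fun y => u y 0) 2 x - pd (fun y => u y 2) 0 x
        = (1 + a * x 0 + x 2) * (co * u₀ 1 + s * (ne⁻¹ * cross u₀ e 1))
      rw [hpd 0 2, hpd 2 0, hc0, hc1, hc2]
      simp only [Matrix.cons_val_zero, Matrix.cons_val_one, Matrix.head_cons,
        Matrix.cons_val_two, Matrix.tail_cons]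
      rw [h2]
      field_simp
      linear_combination (-(co * u₀ 1 * (1 + a * x 0 + x 2))) * hn2
    · show pd (fun y => u y 1) 0 x - pd (fun y => u y 0) 1 x
        = (1 + a * x 0 + x 2) * (co * u₀ 2 + s * (ne⁻¹ * cross u₀ e 2))
      rw [hpd 1 0, hpd 0 1, hc0, hc1, hc2]
      simp only [Matrix.cons_val_zero, Matrix.cons_val_one, Matrix.head_cons,
        Matrix.cons_val_two, Matrix.tail_cons]
      rw [h2]
      field_simp
      linear_combination (co * a * u₀ 0 * (1 + a * x 0 + x 2)) * hn2
  · rw [div3, Fin.sum_univ_three]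
    rw [hpd 0 0, hpd 1 1, hpd 2 2, hc0, hc1, hc2]
    simp only [Matrix.cons_val_zero, Matrix.cons_val_one, Matrix.head_cons,
      Matrix.cons_val_two, Matrix.tail_cons]
    rw [h2]
    field_simp
    ring
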